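/- Let a₁,…,a_m be nonzero Gaussian integers with arguments θ₁,…,θ_m (so a_j = |a_j|e^{iθ_j}), let l ≥ 1 be an integer, and fix signs η_r ∈ {−1,1}, integers ν_r ∈ ℤ, and signs ε_j^{(r)} ∈ {−1,1} for 1 ≤ r ≤ l, 1 ≤ j ≤ m. Then (∏_{j=1}^{m} |a_j|) · Σ_{r=1}^{l} η_r cos(ν_r π/2 + Σ_{j=1}^{m} ε_j^{(r)} θ_j) is a rational integer; consequently, if Σ_{r=1}^{l} η_r cos(ν_r π/2 + Σ_{j=1}^{m} ε_j^{(r)} θ_j) ≠ 0 then its absolute value is at least (∏_{j=1}^{m} |a_j|)^{−1}. The same holds with sin in place of cos. -/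

import Mathlib

open scoped Real

noncomputable section

/-- The cosine sum `∑_{r} η_r cos(ν_r π/2 + ∑_j ε_j^{(r)} θ_j)`, where `θ_j = arg a_j`. -/
def Tcos {l m : ℕ} (η : Fin l → ℝ) (ν : Fin l → ℤ) (ε : Fin l → Fin m → ℝ)
    (a : Fin m → GaussianInt) : ℝ :=
  ∑ r, η r * Real.cos ((ν r : ℝ) * π / 2 +
    ∑ j, ε r j * Complex.arg (GaussianInt.toComplex (a j)))

/-- The sine sum `∑_{r} η_r sin(ν_r π/2 + ∑_j ε_j^{(r)} θ_j)`, where `θ_j = arg a_j`. -/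
def Tsin {l m : ℕ} (η : Fin l → ℝ) (ν : Fin l → ℤ) (ε : Fin l → Fin m → ℝ)
    (a : Fin m → GaussianInt) : ℝ :=
  ∑ r, η r * Real.sin ((ν r : ℝ) * π / 2 +
    ∑ j, ε r j * Complex.arg (GaussianInt.toComplex (a j)))

lemma Ipow_aux (n : ℤ) :
    Complex.I ^ ((n % 4).toNat) = Complex.exp ((n:ℂ) * (π/2) * Complex.I) := by
  have hI : Complex.exp ((π/2 : ℂ) * Complex.I) = Complex.I := by
    simp [Complex.exp_mul_I]
  have h1 : Complex.exp ((n:ℂ) * (π/2) * Complex.I) = Complex.I ^ (n : ℤ) := by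
    rw [mul_assoc, Complex.exp_int_mul, hI]
  have h4 : (Complex.I : ℂ) ^ (4:ℤ) = 1 := by
    rw [(by norm_num : (4:ℤ) = ((4:ℕ):ℤ)), zpow_natCast, Complex.I_pow_four]
  have h2 : Complex.I ^ (n : ℤ) = Complex.I ^ ((n % 4).toNat) := by
    conv_lhs => rw [(by omega : n = n % 4 + 4 * (n / 4))]
    rw [zpow_add₀ Complex.I_ne_zero, zpow_mul, h4, one_zpow, mul_one,
      ← zpow_natCast, Int.toNat_of_nonneg (Int.emod_nonneg n (by norm_num))]
  rw [h1, h2]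

lemma key_aux {m : ℕ} (a : Fin m → GaussianInt) (ha : ∀ j, a j ≠ 0)
    (n : ℤ) (ε' : Fin m → ℝ) (hε' : ∀ j, ε' j = 1 ∨ ε' j = -1) :
    ∃ w : GaussianInt,
      ((∏ j, ‖GaussianInt.toComplex (a j)‖ : ℝ) : ℂ) *
        Complex.exp ((((n : ℝ) * π / 2 +
          ∑ j, ε' j * Complex.arg (GaussianInt.toComplex (a j)) : ℝ) : ℂ) * Complex.I)
        = GaussianInt.toComplex w := by
  refine ⟨(⟨0,1⟩ : GaussianInt) ^ ((n % 4).toNat) *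
    ∏ j, (if ε' j = 1 then a j else star (a j)), ?_⟩
  have hi : GaussianInt.toComplex (⟨0,1⟩ : GaussianInt) = Complex.I := by
    simp [GaussianInt.toComplex_def]
  have hj : ∀ j, GaussianInt.toComplex (if ε' j = 1 then a j else star (a j)) =
      (‖GaussianInt.toComplex (a j)‖ : ℂ) *
        Complex.exp (((ε' j * Complex.arg (GaussianInt.toComplex (a j)) : ℝ) : ℂ) * Complex.I) := by
    intro j
    rcases hε' j with h | h
    · rw [if_pos h, h, one_mul, Complex.norm_mul_exp_arg_mul_I]
    · rw [if_neg (by rw [h]; norm_num), GaussianInt.toComplex_star, h]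
      conv_lhs => rw [← Complex.norm_mul_exp_arg_mul_I (GaussianInt.toComplex (a j))]
      rw [map_mul, Complex.conj_ofReal, ← Complex.exp_conj]
      congr 1
      push_cast
      simp only [map_mul, Complex.conj_ofReal, Complex.conj_I]
      ring
  rw [map_mul, map_pow, map_prod, hi, Ipow_aux]
  symm
  calc (Complex.exp ((n:ℂ) * (π/2) * Complex.I)) *
        ∏ j, GaussianInt.toComplex (if ε' j = 1 then a j else star (a j))
      = (Complex.exp ((n:ℂ) * (π/2) * Complex.I)) *
        ((∏ j, (‖GaussianInt.toComplex (a j)‖ : ℂ)) *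
         Complex.exp (∑ j, ((ε' j * Complex.arg (GaussianInt.toComplex (a j)) : ℝ) : ℂ)
            * Complex.I)) := by
        rw [Finset.prod_congr rfl (fun j _ => hj j), Finset.prod_mul_distrib,
          ← Complex.exp_sum]
    _ = ((∏ j, ‖GaussianInt.toComplex (a j)‖ : ℝ) : ℂ) *
        Complex.exp ((((n : ℝ) * π / 2 +
          ∑ j, ε' j * Complex.arg (GaussianInt.toComplex (a j)) : ℝ) : ℂ) * Complex.I) := by
        rw [show ((((n:ℝ) * π / 2 +
              ∑ j, ε' j * Complex.arg (GaussianInt.toComplex (a j)) : ℝ)) : ℂ) * Complex.I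
            = (n:ℂ) * (π/2) * Complex.I +
              ∑ j, ((ε' j * Complex.arg (GaussianInt.toComplex (a j)) : ℝ) : ℂ) * Complex.I
          from by push_cast; rw [add_mul, Finset.sum_mul]; ring,
          Complex.exp_add, Complex.ofReal_prod]
        ring

end

noncomputable section

lemma bound_aux {P x : ℝ} (hP : 0 < P) (d : ℤ) (h : P * x = d) (hx : x ≠ 0) :
    P⁻¹ ≤ |x| := by
  have hd : d ≠ 0 := by
    rintro rfl
    simp only [Int.cast_zero, mul_eq_zero] at h
    rcases h with h | h
    · exact absurd h hP.ne'
    · exact hx h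
  have h1 : (1:ℝ) ≤ |(d:ℝ)| := by
    have := Int.one_le_abs hd
    exact_mod_cast this
  have h2 : |x| = |(d:ℝ)| / P := by
    rw [← h, abs_mul, abs_of_pos hP]
    field_simp
  rw [h2, inv_eq_one_div]
  exact (div_le_div_iff_of_pos_right hP).mpr h1

theorem trig_sum_times_product_is_integer
    (m : ℕ) (a : Fin m → GaussianInt) (ha : ∀ j, a j ≠ 0)
    (l : ℕ) (hl : 1 ≤ l)
    (η : Fin l → ℝ) (hη : ∀ r, η r = 1 ∨ η r = -1)
    (ν : Fin l → ℤ)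
    (ε : Fin l → Fin m → ℝ) (hε : ∀ r j, ε r j = 1 ∨ ε r j = -1) :
    (∃ d : ℤ, (∏ j, ‖GaussianInt.toComplex (a j)‖) * Tcos η ν ε a = (d : ℝ)) ∧
    (Tcos η ν ε a ≠ 0 →
      (∏ j, ‖GaussianInt.toComplex (a j)‖)⁻¹ ≤ |Tcos η ν ε a|) ∧
    (∃ d : ℤ, (∏ j, ‖GaussianInt.toComplex (a j)‖) * Tsin η ν ε a = (d : ℝ)) ∧
    (Tsin η ν ε a ≠ 0 →
      (∏ j, ‖GaussianInt.toComplex (a j)‖)⁻¹ ≤ |Tsin η ν ε a|) := by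
  set P : ℝ := ∏ j, ‖GaussianInt.toComplex (a j)‖ with hPdef
  have hP : 0 < P := by
    refine Finset.prod_pos fun j _ => ?_
    exact (norm_pos_iff.mpr (by rw [Ne, GaussianInt.toComplex_eq_zero]; exact ha j))
  set θ : Fin l → ℝ := fun r => (ν r : ℝ) * π / 2 +
    ∑ j, ε r j * Complex.arg (GaussianInt.toComplex (a j)) with hθdef
  choose w hw using fun r => key_aux a ha (ν r) (ε r) (hε r)
  have hre : ∀ r, P * Real.cos (θ r) = ((w r).re : ℝ) := by
    intro r
    have h := congrArg Complex.re (hw r)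
    rw [Complex.re_ofReal_mul, Complex.exp_ofReal_mul_I_re, ← GaussianInt.intCast_re] at h
    exact h
  have him : ∀ r, P * Real.sin (θ r) = ((w r).im : ℝ) := by
    intro r
    have h := congrArg Complex.im (hw r)
    rw [Complex.im_ofReal_mul, Complex.exp_ofReal_mul_I_im, ← GaussianInt.intCast_im] at h
    exact h
  set e : Fin l → ℤ := fun r => if η r = 1 then 1 else -1 with hedef
  have he : ∀ r, ((e r : ℤ) : ℝ) = η r := by
    intro r
    rcases hη r with h | h <;> simp [hedef, h] <;> norm_num
  have hcos : P * Tcos η ν ε a = ((∑ r, e r * (w r).re : ℤ) : ℝ) := by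
    unfold Tcos
    rw [Finset.mul_sum]
    push_cast
    refine Finset.sum_congr rfl fun r _ => ?_
    rw [show P * (η r * Real.cos (θ r)) = η r * (P * Real.cos (θ r)) from by ring,
      hre r, he r]
  have hsin : P * Tsin η ν ε a = ((∑ r, e r * (w r).im : ℤ) : ℝ) := by
    unfold Tsin
    rw [Finset.mul_sum]
    push_cast
    refine Finset.sum_congr rfl fun r _ => ?_
    rw [show P * (η r * Real.sin (θ r)) = η r * (P * Real.sin (θ r)) from by ring,
      him r, he r]
  exact ⟨⟨_, hcos⟩, fun h => bound_aux hP _ hcos h, ⟨_, hsin⟩,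
    fun h => bound_aux hP _ hsin h⟩

end
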